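/- Let R > 0 and let Δ̄ = {z ∈ ℂ : |z| ≤ R}. Let (f_n) be a sequence of continuous real-valued functions on Δ̄ such that for every n and every 0 < ε ≤ R one has f_n(0) ≤ sup_{|z|=ε} f_n(z). Suppose f_n converges to a function f uniformly on each circle {|z| = ε} for 0 < ε ≤ R, and that there exists a monotonically increasing function φ : (0, R] → ℝ with lim_{t→0⁺} φ(t) = −∞ such that f(z) ≤ φ(|z|) for all 0 < |z| ≤ R. Then liminf_{n→∞} f_n(0) = −∞. -/

import Mathlib

open Filter

theorem stmt_13 (R : ℝ) (hR : 0 < R) (f : ℂ → ℝ) (fn : ℕ → ℂ → ℝ)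
    (hcont : ∀ n, ContinuousOn (fn n) {z : ℂ | ‖z‖ ≤ R})
    (hmax : ∀ n, ∀ ε : ℝ, 0 < ε → ε ≤ R →
      fn n 0 ≤ sSup ((fn n) '' {z : ℂ | ‖z‖ = ε}))
    (hconv : ∀ ε : ℝ, 0 < ε → ε ≤ R →
      TendstoUniformlyOn fn f atTop {z : ℂ | ‖z‖ = ε})
    (φ : ℝ → ℝ) (hφ : MonotoneOn φ (Set.Ioc 0 R))
    (hφlim : Tendsto φ (nhdsWithin 0 (Set.Ioi 0)) atBot)
    (hfφ : ∀ z : ℂ, 0 < ‖z‖ → ‖z‖ ≤ R → f z ≤ φ (‖z‖)) :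
    liminf (fun n => (fn n 0 : EReal)) atTop = ⊥ := by
  have key : Tendsto (fun n => (fn n 0 : EReal)) atTop (nhds ⊥) := by
    rw [EReal.tendsto_nhds_bot_iff_real]
    intro M
    -- choose ε with φ ε ≤ M - 2
    have h1 : ∀ᶠ t in nhdsWithin 0 (Set.Ioi 0), φ t ≤ M - 2 :=
      hφlim.eventually (eventually_le_atBot (M - 2))
    rw [eventually_nhdsWithin_iff, Metric.eventually_nhds_iff] at h1
    obtain ⟨δ, hδ, hδ'⟩ := h1
    set ε : ℝ := min (δ / 2) R with hε
    have hε0 : 0 < ε := lt_min (by linarith) hR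
    have hεR : ε ≤ R := min_le_right _ _
    have hφε : φ ε ≤ M - 2 := by
      apply hδ' (y := ε)
      · simp only [Real.dist_eq, sub_zero, abs_of_pos hε0]
        calc ε ≤ δ / 2 := min_le_left _ _
        _ < δ := by linarith
      · exact hε0
    -- on the circle |z| = ε, f z ≤ M - 2
    have hfM : ∀ z : ℂ, ‖z‖ = ε → f z ≤ M - 2 := by
      intro z hz
      have := hfφ z (hz ▸ hε0) (hz ▸ hεR)
      rw [hz] at this
      linarith
    -- uniform convergence gives eventually fn n z ≤ M - 1 on the circle
    have h2 := (Metric.tendstoUniformlyOn_iff.mp (hconv ε hε0 hεR)) 1 one_pos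
    filter_upwards [h2] with n hn
    have hball : ∀ z : ℂ, ‖z‖ = ε → fn n z ≤ M - 1 := by
      intro z hz
      have := hn z hz
      rw [Real.dist_eq, abs_lt] at this
      have hf := hfM z hz
      linarith
    have hne : ((fn n) '' {z : ℂ | ‖z‖ = ε}).Nonempty := by
      refine ⟨fn n (ε : ℂ), ⟨(ε : ℂ), ?_, rfl⟩⟩
      simp [abs_of_pos hε0]
    have hsup : sSup ((fn n) '' {z : ℂ | ‖z‖ = ε}) ≤ M - 1 := by
      apply csSup_le hne
      rintro _ ⟨z, hz, rfl⟩
      exact hball z hz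
    have h0 : fn n 0 ≤ M - 1 := (hmax n ε hε0 hεR).trans hsup
    exact_mod_cast (by linarith : fn n 0 < M)
  exact key.liminf_eq
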